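/- Combining the previous facts: the minimax fidelity of the line graph on n vertices, given by max_a C(a, n-1)/2^a, equals C(2(n-1), n-1)/2^{2(n-1)} and tends to 0 as n → ∞. -/

import Mathlib

open Filter


-- monotone up: C(n,j) ≤ C(n,j+1) if 2j+1 ≤ n
lemma mono_up (j n : ℕ) (h : 2*j+1 ≤ n) : n.choose j ≤ n.choose (j+1) := by
  have he := Nat.choose_succ_right_eq n j
  have h1 : j + 1 ≤ n - j := by omega
  have : n.choose j * (j+1) ≤ n.choose (j+1) * (j+1) := by
    rw [he]; exact Nat.mul_le_mul_left _ h1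
  exact Nat.le_of_mul_le_mul_right this (Nat.succ_pos j)

lemma mono_down (j a : ℕ) (h : a ≤ 2*j+1) : a.choose (j+1) ≤ a.choose j := by
  have he := Nat.choose_succ_right_eq a j
  have h1 : a - j ≤ j + 1 := by omega
  have : a.choose (j+1) * (j+1) ≤ a.choose j * (j+1) := by
    rw [he]; exact Nat.mul_le_mul_left _ h1
  exact Nat.le_of_mul_le_mul_right this (Nat.succ_pos j)

lemma lemA (k : ℕ) : ∀ d a, a + d = 2*k → a.choose k * 2^d ≤ (2*k).choose k := by
  intro d
  induction d with
  | zero => intro a h; simp [show a = 2*k by omega]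
  | succ d ih =>
    intro a h
    rcases Nat.eq_zero_or_pos k with hk | hk
    · omega
    obtain ⟨j, rfl⟩ : ∃ j, k = j + 1 := ⟨k-1, by omega⟩
    have h2 : 2 * a.choose (j+1) ≤ (a+1).choose (j+1) := by
      rw [Nat.choose_succ_succ']
      have := mono_down j a (by omega)
      omega
    calc a.choose (j+1) * 2^(d+1) = (2 * a.choose (j+1)) * 2^d := by ring
      _ ≤ (a+1).choose (j+1) * 2^d := Nat.mul_le_mul_right _ h2
      _ ≤ (2*(j+1)).choose (j+1) := ih (a+1) (by omega)

lemma lemB (k : ℕ) : ∀ m, (2*k + m).choose k ≤ (2*k).choose k * 2^m := by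
  intro m
  induction m with
  | zero => simp
  | succ m ih =>
    rcases Nat.eq_zero_or_pos k with hk | hk
    · subst hk; simpa using Nat.one_le_two_pow
    obtain ⟨j, rfl⟩ : ∃ j, k = j + 1 := ⟨k-1, by omega⟩
    have h2 : (2*(j+1) + (m+1)).choose (j+1) ≤ 2 * (2*(j+1)+m).choose (j+1) := by
      have : 2*(j+1) + (m+1) = (2*(j+1)+m) + 1 := by omega
      rw [this, Nat.choose_succ_succ']
      have := mono_up j (2*(j+1)+m) (by omega)
      omega
    calc (2*(j+1) + (m+1)).choose (j+1) ≤ 2 * (2*(j+1)+m).choose (j+1) := h2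
      _ ≤ 2 * ((2*(j+1)).choose (j+1) * 2^m) := Nat.mul_le_mul_left _ ih
      _ = (2*(j+1)).choose (j+1) * 2^(m+1) := by ring

lemma lemMain (k a : ℕ) : a.choose k * 2^(2*k) ≤ (2*k).choose k * 2^a := by
  rcases le_or_gt a (2*k) with h | h
  · have := lemA k (2*k - a) a (by omega)
    calc a.choose k * 2^(2*k) = (a.choose k * 2^(2*k-a)) * 2^a := by
          rw [mul_assoc, ← pow_add]; congr 2; omega
      _ ≤ (2*k).choose k * 2^a := Nat.mul_le_mul_right _ this
  · obtain ⟨m, rfl⟩ : ∃ m, a = 2*k + m := ⟨a - 2*k, by omega⟩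
    have := lemB k m
    calc (2*k+m).choose k * 2^(2*k) ≤ ((2*k).choose k * 2^m) * 2^(2*k) :=
          Nat.mul_le_mul_right _ this
      _ = (2*k).choose k * 2^(2*k+m) := by rw [mul_assoc, ← pow_add]; ring_nf

lemma centralSq (k : ℕ) : (Nat.centralBinom k)^2 * (2*k+1) ≤ 16^k := by
  induction k with
  | zero => simp [Nat.centralBinom]
  | succ k ih =>
    have h := Nat.succ_mul_centralBinom_succ k
    set c := Nat.centralBinom k with hc
    set C := Nat.centralBinom (k+1) with hC
    have hpos : 0 < (k+1)^2 := by positivity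
    apply Nat.le_of_mul_le_mul_left _ hpos
    calc (k+1)^2 * (C^2*(2*(k+1)+1)) = ((k+1)*C)^2*(2*k+3) := by ring
      _ = (2*(2*k+1)*c)^2*(2*k+3) := by rw [h]
      _ = (4*(2*k+1)*(2*k+3)) * (c^2*(2*k+1)) := by ring
      _ ≤ (4*(2*k+1)*(2*k+3)) * 16^k := Nat.mul_le_mul_left _ ih
      _ ≤ ((k+1)^2*16) * 16^k := Nat.mul_le_mul_right _ (by nlinarith)
      _ = (k+1)^2 * 16^(k+1) := by ring

lemma realBound (k : ℕ) :
    ((2*k).choose k : ℝ) / 2^(2*k) ≤ Real.sqrt (1 / (2*k+1)) := by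
  have h1 : (0:ℝ) ≤ ((2*k).choose k : ℝ) / 2^(2*k) := by positivity
  rw [Real.le_sqrt h1 (by positivity)]
  have hc := centralSq k
  have hc' : (((2*k).choose k : ℝ))^2 * (2*k+1) ≤ 16^k := by
    have : ((Nat.centralBinom k)^2 * (2*k+1) : ℕ) ≤ (16^k : ℕ) := hc
    have := (Nat.cast_le (α := ℝ)).2 this
    push_cast [Nat.centralBinom] at this ⊢
    convert this using 2 <;> norm_num
  rw [div_pow, div_le_div_iff₀ (by positivity) (by positivity)]
  have h16 : ((2:ℝ)^(2*k))^2 = 16^k := by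
    rw [← pow_mul, show 2*k*2 = 4*k by ring, pow_mul]; norm_num
  rw [one_mul, h16]
  linarith


/-- The minimax fidelity of the line graph on `n` vertices, `max_a C(a,n-1)/2^a`,
equals `C(2(n-1), n-1)/2^{2(n-1)}` (the maximum is attained at `a = 2(n-1)`),
and this quantity tends to `0` as `n → ∞`. -/
theorem stmt11 :
    (∀ n : ℕ, 1 ≤ n → ∀ a : ℕ,
      (a.choose (n - 1) : ℝ) / 2 ^ a
        ≤ ((2 * (n - 1)).choose (n - 1) : ℝ) / 2 ^ (2 * (n - 1)))
    ∧ Tendsto (fun n : ℕ =>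
        ((2 * (n - 1)).choose (n - 1) : ℝ) / 2 ^ (2 * (n - 1))) atTop (nhds 0) := by
  constructor
  · intro n _ a
    set k := n - 1
    rw [div_le_div_iff₀ (by positivity) (by positivity)]
    have := lemMain k a
    have := (Nat.cast_le (α := ℝ)).2 this
    push_cast at this
    linarith
  · apply squeeze_zero (fun n => by positivity) (fun n => realBound (n-1))
    have h1 : Tendsto (fun n : ℕ => (1:ℝ) / (2*((n-1 : ℕ):ℝ)+1)) atTop (nhds 0) := by
      have h2 : Tendsto (fun n : ℕ => (2*((n-1 : ℕ):ℝ)+1)) atTop atTop := by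
        apply tendsto_atTop_add_const_right
        apply Tendsto.const_mul_atTop (show (0:ℝ) < 2 by norm_num)
        exact tendsto_natCast_atTop_atTop.comp (tendsto_sub_atTop_nat 1)
      simpa [one_div, Pi.inv_def] using h2.inv_tendsto_atTop
    have h3 := (Real.continuous_sqrt.tendsto 0).comp h1
    simpa only [Function.comp_def, Real.sqrt_zero] using h3
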